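/- Let Assumptions D1b and D2 hold for the density f₀ and level f_{τ,0}. Then for δ > 0 small enough there exists a constant c₂ > 0 such that for any sequence δₙ (with 0 < δₙ ≤ δ), setting εₙ = c₂ δₙ, one has |f₀(x) − f_{τ,0}| ≥ εₙ for every x ∈ ( L_{δₙ}(f_{τ,0})^c \ L_δ(f_{τ,0})^c ) ∪ ( L_{−δₙ}(f_{τ,0}) \ L_{−δ}(f_{τ,0}) ). -/

import Mathlib

open MeasureTheory Filter Topology Asymptotics
open scoped ENNReal NNReal symmDiff

noncomputable section

namespace LSBS

attribute [local instance] Classical.propDecidable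

/-- The standard normal density `φ`. -/
def gpdf (t : ℝ) : ℝ := (Real.sqrt (2 * Real.pi))⁻¹ * Real.exp (-(t ^ 2) / 2)

/-- The standard normal distribution function `Φ`. -/
def gcdf (t : ℝ) : ℝ := ∫ u in Set.Iic t, gpdf u

variable {d : ℕ}

/-- Euclidean space `ℝ^d`. -/
abbrev Evec (d : ℕ) := EuclideanSpace ℝ (Fin d)

/-- `μ_{f₀}(A) = ∫_A f₀(x) dx`. -/
def muF (f₀ : Evec d → ℝ) (A : Set (Evec d)) : ℝ := ∫ x in A, f₀ x

/-- The positive semidefinite square root of a matrix (junk value `0` if not psd). -/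
def matSqrt (H : Matrix (Fin d) (Fin d) ℝ) : Matrix (Fin d) (Fin d) ℝ :=
  if h : H.PosSemidef then
    (h.1.eigenvectorUnitary : Matrix (Fin d) (Fin d) ℝ) *
      Matrix.diagonal ((↑) ∘ (fun i => Real.sqrt (h.1.eigenvalues i))) *
      (star h.1.eigenvectorUnitary : Matrix (Fin d) (Fin d) ℝ)
  else 0

/-- `H^{-1/2}`, the inverse of the psd square root. -/
def invSqrt (H : Matrix (Fin d) (Fin d) ℝ) : Matrix (Fin d) (Fin d) ℝ := (matSqrt H)⁻¹

/-- Apply a matrix to a Euclidean vector. -/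
def mApply (M : Matrix (Fin d) (Fin d) ℝ) (v : Evec d) : Evec d := Matrix.toEuclideanLin M v

/-- Entrywise sup-norm of a matrix. -/
def matNorm (M : Matrix (Fin d) (Fin d) ℝ) : ℝ := ⨆ i, ⨆ j, |M i j|

/-- The kernel density estimator
`f̂_{n,H}(x) = n⁻¹ ∑_{i<n} K(H^{-1/2}(x - Xᵢ)) |H|^{-1/2}`. -/
def kde (K : Evec d → ℝ) (H : Matrix (Fin d) (Fin d) ℝ) (X : ℕ → Evec d) (n : ℕ)
    (x : Evec d) : ℝ :=
  (n : ℝ)⁻¹ * ∑ i ∈ Finset.range n, K (mApply (invSqrt H) (x - X i)) * H.det ^ (-(1 : ℝ) / 2)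

/-- `R(K) = ∫ K² dλ`. -/
def RK (K : Evec d → ℝ) : ℝ := ∫ x, (K x) ^ 2

/-- The Hessian matrix of `f` at `x`, via the second iterated Fréchet derivative. -/
def hessian (f : Evec d → ℝ) (x : Evec d) : Matrix (Fin d) (Fin d) ℝ :=
  Matrix.of fun i j =>
    iteratedFDeriv ℝ 2 f x ![EuclideanSpace.single i (1 : ℝ), EuclideanSpace.single j (1 : ℝ)]

/-- `D₁(x,H) = ½ μ₂(K) tr(H ∇²f₀(x))`. -/
def D1 (μ₂ : ℝ) (f₀ : Evec d → ℝ) (H : Matrix (Fin d) (Fin d) ℝ) (x : Evec d) : ℝ :=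
  (1 / 2) * μ₂ * (H * hessian f₀ x).trace

/-- Eigenvalues of a symmetric matrix (junk value `0` if not Hermitian). -/
def eigs (H : Matrix (Fin d) (Fin d) ℝ) : Fin d → ℝ :=
  if h : H.IsHermitian then h.eigenvalues else 0

/-- Largest eigenvalue. -/
def lamMax (H : Matrix (Fin d) (Fin d) ℝ) : ℝ := ⨆ i, eigs H i

/-- Smallest eigenvalue. -/
def lamMin (H : Matrix (Fin d) (Fin d) ℝ) : ℝ := ⨅ i, eigs H i

/-- `f_τ(f) = inf { y > 0 : ∫ f 1{f ≥ y} dλ ≤ 1 - τ }`. -/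
def tauLevel (τ : ℝ) (f : Evec d → ℝ) : ℝ :=
  sInf {y : ℝ | 0 < y ∧ (∫ x in {z | y ≤ f z}, f x) ≤ 1 - τ}

/-- Variant of `tauLevel` with `y ≥ 0`. -/
def tauLevel0 (τ : ℝ) (f : Evec d → ℝ) : ℝ :=
  sInf {y : ℝ | 0 ≤ y ∧ (∫ x in {z | y ≤ f z}, f x) ≤ 1 - τ}

/-- The super-level set `{x : f(x) ≥ c}`. -/
def supLevel (f : Evec d → ℝ) (c : ℝ) : Set (Evec d) := {x | c ≤ f x}

/-- The level set (contour) `{x : f(x) = c}`. -/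
def levelSet (f : Evec d → ℝ) (c : ℝ) : Set (Evec d) := {x | f x = c}

/-- `S^δ = ∪_{x ∈ S} B(x,δ)`. -/
def tube (S : Set (Evec d)) (δ : ℝ) : Set (Evec d) := ⋃ x ∈ S, Metric.closedBall x δ

/-- `f` is a probability density on `ℝ^d`. -/
structure IsDensity (f : Evec d → ℝ) : Prop where
  nonneg : ∀ x, 0 ≤ f x
  integrable : MeasureTheory.Integrable f
  total : (∫ x, f x) = 1

/-- VC-type uniform covering number bound for a class of functions, with envelope. -/
def VCClass (𝓕 : Set (Evec d → ℝ)) : Prop :=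
  ∃ F : Evec d → ℝ, (∀ f ∈ 𝓕, ∀ x, |f x| ≤ F x) ∧
    ∃ A v : ℝ, 0 < A ∧ 0 < v ∧
      ∀ P : Measure (Evec d), IsProbabilityMeasure P → ∀ τ : ℝ, 0 < τ →
        ∃ G : Finset (Evec d → ℝ), (G.card : ℝ) ≤ (A / τ) ^ v ∧
          ∀ f ∈ 𝓕, ∃ g ∈ G, (∫ x, (f x - g x) ^ 2 ∂P) ≤ τ ^ 2 * ∫ x, (F x) ^ 2 ∂P

/-- The class `{ K(H^{-1/2}(t - ·)) : t ∈ ℝ^d, H ∈ 𝒮 }`. -/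
def kerClass (K : Evec d → ℝ) : Set (Evec d → ℝ) :=
  {f | ∃ (t : Evec d) (H : Matrix (Fin d) (Fin d) ℝ), H.PosDef ∧
    f = fun y => K (mApply (invSqrt H) (t - y))}

/-- The class `{ ‖∇K(H^{-1/2}(t - ·))‖ : t ∈ ℝ^d, H ∈ 𝒮 }`. -/
def gradKerClass (K : Evec d → ℝ) : Set (Evec d → ℝ) :=
  {f | ∃ (t : Evec d) (H : Matrix (Fin d) (Fin d) ℝ), H.PosDef ∧
    f = fun y => ‖gradient K (mApply (invSqrt H) (t - y))‖}

/-- Assumption K of the paper. -/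
structure AssumptionK (K : Evec d → ℝ) (μ₂ : ℝ) : Prop where
  contDiff : ContDiff ℝ 1 K
  density : IsDensity K
  bounded : ∃ M, ∀ x, K x ≤ M
  gradBounded : ∃ M, ∀ x, ‖gradient K x‖ ≤ M
  sqIntegrable : MeasureTheory.Integrable fun x => (K x) ^ 2
  gradProdIntegrable : ∀ i j : Fin d,
    MeasureTheory.Integrable fun x => gradient K x i * gradient K x j
  meanZero : ∀ i : Fin d, (∫ x, x i * K x) = 0
  secondMoment : ∀ i j : Fin d, (∫ x, x i * x j * K x) = if i = j then μ₂ else 0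
  vcKer : VCClass (kerClass K)
  vcGradKer : VCClass (gradKerClass K)

/-- Assumption K2 of the paper: coordinatewise symmetry of `K` and square-integrable
first and second partial derivatives. -/
structure AssumptionK2 (K : Evec d → ℝ) : Prop where
  symm : ∀ (x : Evec d) (i : Fin d),
    K (x - (2 * x i) • EuclideanSpace.single i (1 : ℝ)) = K x
  firstSq : ∀ i : Fin d, MeasureTheory.Integrable fun x => (gradient K x i) ^ 2
  secondSq : ∀ i j : Fin d, MeasureTheory.Integrable fun x => (hessian K x i j) ^ 2

/-- Assumption H of the paper, for the sequence of bandwidth matrices. -/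
structure AssumptionH (Hseq : ℕ → Matrix (Fin d) (Fin d) ℝ) : Prop where
  symm : ∀ n, (Hseq n).IsSymm
  posDef : ∀ n, (Hseq n).PosDef
  detAnti : Antitone fun n => (Hseq n).det
  detTendsto : Tendsto (fun n => (Hseq n).det) atTop (𝓝 0)
  ratio : Tendsto (fun n : ℕ => (n : ℝ) * (Hseq n).det ^ ((1 : ℝ) / 2) /
      Real.log ((Hseq n).det ^ (-(1 : ℝ) / 2))) atTop atTop
  loglog : Tendsto (fun n : ℕ => Real.log (Real.log (n : ℝ)) /
      Real.log ((Hseq n).det ^ (-(1 : ℝ) / 2))) atTop (𝓝 0)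
  doubling : ∃ c : ℝ, 0 < c ∧ ∀ n,
      (Hseq n).det ^ ((1 : ℝ) / 2) ≤ c * (Hseq (2 * n)).det ^ ((1 : ℝ) / 2)
  eigenComparable : (fun n => lamMax (Hseq n)) =O[atTop] fun n => lamMin (Hseq n)
  ratioMin : Tendsto (fun n : ℕ => (n : ℝ) * (Hseq n).det ^ ((1 : ℝ) / 2) * lamMin (Hseq n) /
      Real.log ((Hseq n).det ^ (-(1 : ℝ) / 2))) atTop atTop
  lamMaxBound : (fun n => lamMax (Hseq n)) =O[atTop]
      fun n : ℕ => (n : ℝ) ^ (-(2 : ℝ) / (4 + (d : ℝ)))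

/-- Assumption H2 of the paper, for the pilot bandwidth sequences `H₀, H₁, H₂`. -/
structure AssumptionH2 (H0 H1 H2m : ℕ → Matrix (Fin d) (Fin d) ℝ) : Prop where
  symm : ∀ n, (H0 n).IsSymm ∧ (H1 n).IsSymm ∧ (H2m n).IsSymm
  posDef : ∀ n, (H0 n).PosDef ∧ (H1 n).PosDef ∧ (H2m n).PosDef
  tendstoZero : ∀ i j, Tendsto (fun n => H0 n i j) atTop (𝓝 0) ∧
      Tendsto (fun n => H1 n i j) atTop (𝓝 0) ∧ Tendsto (fun n => H2m n i j) atTop (𝓝 0)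
  r0 : Tendsto (fun n : ℕ => (n : ℝ)⁻¹ * (H0 n).det ^ (-(1 : ℝ) / 2)) atTop (𝓝 0)
  r1 : ∀ i j, Tendsto (fun n : ℕ => (n : ℝ)⁻¹ * (H1 n).det ^ (-(1 : ℝ) / 2) * (H1 n)⁻¹ i j)
      atTop (𝓝 0)
  r2 : ∀ i j k l, Tendsto (fun n : ℕ => (n : ℝ)⁻¹ * (H2m n).det ^ (-(1 : ℝ) / 2) *
      ((H2m n)⁻¹ i j * (H2m n)⁻¹ k l)) atTop (𝓝 0)

/-- Assumption D1a of the paper (for the level-set problem at level `c`). -/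
structure AssumptionD1a (f₀ : Evec d → ℝ) (c : ℝ) : Prop where
  bounded : BddAbove (Set.range f₀)
  smooth : ∃ a : ℝ, 0 < a ∧ ∃ V : Set (Evec d), IsOpen V ∧
    {x | c - a ≤ f₀ x ∧ f₀ x ≤ c + a} ⊆ V ∧ ContDiffOn ℝ 2 f₀ V ∧
    (∃ M : ℝ, ∀ x ∈ V, ‖gradient f₀ x‖ ≤ M ∧ ∀ i j, |hessian f₀ x i j| ≤ M) ∧
    (∃ b : ℝ, 0 < b ∧ ∀ x, c - a ≤ f₀ x → f₀ x ≤ c + a → b ≤ ‖gradient f₀ x‖) ∧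
    (∃ δ : ℝ, 0 < δ ∧ {x | c - a ≤ f₀ x ∧ f₀ x ≤ c + a} ⊆ tube (levelSet f₀ c) δ)

/-- Assumption D1b of the paper (for the HDR problem at level `f_{τ,0}`). -/
structure AssumptionD1b (f₀ : Evec d → ℝ) (ftau : ℝ) : Prop where
  bounded : BddAbove (Set.range f₀)
  smooth : ContDiff ℝ 2 f₀
  derivBounded : ∃ M : ℝ, ∀ x, ‖gradient f₀ x‖ ≤ M ∧ ∀ i j, |hessian f₀ x i j| ≤ M
  levelNbhd : ∃ a : ℝ, 0 < a ∧
    (∃ b : ℝ, 0 < b ∧ ∀ x, ftau - a ≤ f₀ x → f₀ x ≤ ftau + a → b ≤ ‖gradient f₀ x‖) ∧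
    (∃ δ : ℝ, 0 < δ ∧ {x | ftau - a ≤ f₀ x ∧ f₀ x ≤ ftau + a} ⊆ tube (levelSet f₀ ftau) δ)

/-- Assumption D3 of the paper: four continuous, bounded, square-integrable derivatives. -/
structure AssumptionD3 (f₀ : Evec d → ℝ) : Prop where
  smooth : ContDiff ℝ 4 f₀
  bounded : ∀ k : ℕ, k ≤ 4 → ∃ M, ∀ x, ‖iteratedFDeriv ℝ k f₀ x‖ ≤ M
  sqIntegrable : ∀ k : ℕ, k ≤ 4 →
    MeasureTheory.Integrable fun x => ‖iteratedFDeriv ℝ k f₀ x‖ ^ 2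

/-- `A_x = -‖∇f₀(x)‖ / √(R(K) c)`. -/
def Acoef (K : Evec d → ℝ) (f₀ : Evec d → ℝ) (c : ℝ) (x : Evec d) : ℝ :=
  -(‖gradient f₀ x‖ / Real.sqrt (RK K * c))

/-- `B_x(H) = -√(n |H|^{1/2}) D₁(x,H) / √(R(K) c)`. -/
def Bcoef (K : Evec d → ℝ) (μ₂ : ℝ) (f₀ : Evec d → ℝ) (c : ℝ) (n : ℕ)
    (H : Matrix (Fin d) (Fin d) ℝ) (x : Evec d) : ℝ :=
  -(Real.sqrt ((n : ℝ) * H.det ^ ((1 : ℝ) / 2)) * D1 μ₂ f₀ H x / Real.sqrt (RK K * c))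

/-- The asymptotic approximation `LS(H)` of the level-set risk. -/
def LSrisk (K : Evec d → ℝ) (μ₂ : ℝ) (f₀ : Evec d → ℝ) (c : ℝ) (n : ℕ)
    (H : Matrix (Fin d) (Fin d) ℝ) : ℝ :=
  c / Real.sqrt ((n : ℝ) * H.det ^ ((1 : ℝ) / 2)) *
    ∫ x in levelSet f₀ c,
      (2 * gpdf (Bcoef K μ₂ f₀ c n H x) +
        2 * gcdf (Bcoef K μ₂ f₀ c n H x) * Bcoef K μ₂ f₀ c n H x -
        Bcoef K μ₂ f₀ c n H x) / -(Acoef K f₀ c x) ∂μH[(d : ℝ) - 1]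

/-- `w₀ = (∫_{β_τ} ‖∇f₀‖⁻¹ dℋ)⁻¹`. -/
def w0 (f₀ : Evec d → ℝ) (ftau : ℝ) : ℝ :=
  (∫ x in levelSet f₀ ftau, ‖gradient f₀ x‖⁻¹ ∂μH[(d : ℝ) - 1])⁻¹

/-- `V₁(H) = ∫_{β_τ} D₁(x,H)/‖∇f₀(x)‖ dℋ(x)`. -/
def V1 (μ₂ : ℝ) (f₀ : Evec d → ℝ) (ftau : ℝ) (H : Matrix (Fin d) (Fin d) ℝ) : ℝ :=
  ∫ x in levelSet f₀ ftau, D1 μ₂ f₀ H x / ‖gradient f₀ x‖ ∂μH[(d : ℝ) - 1]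

/-- `V₂(H) = f_{τ,0}⁻¹ ∫_{L_τ} D₁(x,H) dx`. -/
def V2 (μ₂ : ℝ) (f₀ : Evec d → ℝ) (ftau : ℝ) (H : Matrix (Fin d) (Fin d) ℝ) : ℝ :=
  ftau⁻¹ * ∫ x in supLevel f₀ ftau, D1 μ₂ f₀ H x

/-- `D₂(H) = w₀ (V₁(H) + V₂(H))`. -/
def D2c (μ₂ : ℝ) (f₀ : Evec d → ℝ) (ftau : ℝ) (H : Matrix (Fin d) (Fin d) ℝ) : ℝ :=
  w0 f₀ ftau * (V1 μ₂ f₀ ftau H + V2 μ₂ f₀ ftau H)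

/-- `C_x(H) = B_x(H) + √(n|H|^{1/2}/(R(K) f_{τ,0})) D₂(H)`. -/
def Ccoef (K : Evec d → ℝ) (μ₂ : ℝ) (f₀ : Evec d → ℝ) (ftau : ℝ) (n : ℕ)
    (H : Matrix (Fin d) (Fin d) ℝ) (x : Evec d) : ℝ :=
  Bcoef K μ₂ f₀ ftau n H x +
    Real.sqrt ((n : ℝ) * H.det ^ ((1 : ℝ) / 2) / (RK K * ftau)) * D2c μ₂ f₀ ftau H

/-- The asymptotic approximation `HDR(H)` of the HDR risk. -/
def HDRrisk (K : Evec d → ℝ) (μ₂ : ℝ) (f₀ : Evec d → ℝ) (ftau : ℝ) (n : ℕ)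
    (H : Matrix (Fin d) (Fin d) ℝ) : ℝ :=
  ftau / Real.sqrt ((n : ℝ) * H.det ^ ((1 : ℝ) / 2)) *
    ∫ x in levelSet f₀ ftau,
      (2 * gpdf (Ccoef K μ₂ f₀ ftau n H x) +
        2 * gcdf (Ccoef K μ₂ f₀ ftau n H x) * Ccoef K μ₂ f₀ ftau n H x -
        Ccoef K μ₂ f₀ ftau n H x) / -(Acoef K f₀ ftau x) ∂μH[(d : ℝ) - 1]

/-- `F_x = -½ μ₂(K) tr(∇²f(x)) / √(R(K) c)`, with a generic curvature function `fhess`. -/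
def FxLS (K : Evec d → ℝ) (μ₂ c : ℝ) (fhess : Evec d → ℝ) (x : Evec d) : ℝ :=
  -((1 / 2) * μ₂ * (hessian fhess x).trace / Real.sqrt (RK K * c))

/-- `A_x = -‖∇f(x)‖/√(R(K) c)`, with a generic gradient function `fgrad`. -/
def AxLS (K : Evec d → ℝ) (c : ℝ) (fgrad : Evec d → ℝ) (x : Evec d) : ℝ :=
  -(‖gradient fgrad x‖ / Real.sqrt (RK K * c))

/-- The (possibly plug-in) approximation `LS(h)` for bandwidths `h² I`:
`LS(h) = (c/(n h^d)^{1/2}) ∫_β [φ(B) + 2Φ(B)B − B]/(−A) dℋ` with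
`B_x(h) = (n h^{d+4})^{1/2} F_x`. -/
def LSgen (K : Evec d → ℝ) (μ₂ c : ℝ) (fgrad fhess : Evec d → ℝ) (β : Set (Evec d))
    (n : ℕ) (h : ℝ) : ℝ :=
  c / Real.sqrt ((n : ℝ) * h ^ d) *
    ∫ x in β,
      (gpdf (Real.sqrt ((n : ℝ) * h ^ (d + 4)) * FxLS K μ₂ c fhess x) +
        2 * gcdf (Real.sqrt ((n : ℝ) * h ^ (d + 4)) * FxLS K μ₂ c fhess x) *
          (Real.sqrt ((n : ℝ) * h ^ (d + 4)) * FxLS K μ₂ c fhess x) -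
        Real.sqrt ((n : ℝ) * h ^ (d + 4)) * FxLS K μ₂ c fhess x) /
        -(AxLS K c fgrad x) ∂μH[(d : ℝ) - 1]

/-- `AR_LS(s) = s^{−d/(d+4)} ∫_{β(c)} [φ(sF_x) + 2Φ(sF_x)sF_x − sF_x]/(−A_x) dℋ(x)`. -/
def ARLS (K : Evec d → ℝ) (μ₂ c : ℝ) (f₀ : Evec d → ℝ) (s : ℝ) : ℝ :=
  s ^ (-(d : ℝ) / ((d : ℝ) + 4)) *
    ∫ x in levelSet f₀ c,
      (gpdf (s * FxLS K μ₂ c f₀ x) + 2 * gcdf (s * FxLS K μ₂ c f₀ x) * (s * FxLS K μ₂ c f₀ x) -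
        s * FxLS K μ₂ c f₀ x) / -(AxLS K c f₀ x) ∂μH[(d : ℝ) - 1]

/-- `A_x = -‖∇f(x)‖/√(R(K) f_{τ,0})` (HDR version with generic gradient function). -/
def AxGen (K : Evec d → ℝ) (ftau : ℝ) (fgrad : Evec d → ℝ) (x : Evec d) : ℝ :=
  -(‖gradient fgrad x‖ / Real.sqrt (RK K * ftau))

/-- The quantity `G_x` of the HDR bandwidth-selection problem, with generic plug-ins. -/
def GxHDR (K : Evec d → ℝ) (μ₂ ftau : ℝ) (fgrad fhess : Evec d → ℝ)
    (β L : Set (Evec d)) (x : Evec d) : ℝ :=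
  -(μ₂ * (hessian fhess x).trace / Real.sqrt (RK K * ftau)) +
    ((∫ y in β, ‖gradient fgrad y‖⁻¹ ∂μH[(d : ℝ) - 1])⁻¹ *
        (∫ y in β, μ₂ * (hessian fhess y).trace / (2 * ‖gradient fgrad y‖)
          ∂μH[(d : ℝ) - 1]) +
      (∫ y in β, ‖gradient fgrad y‖⁻¹ ∂μH[(d : ℝ) - 1])⁻¹ / ftau *
        ∫ y in L, μ₂ * (hessian fhess y).trace / 2) / Real.sqrt (RK K * ftau)

/-- The (possibly plug-in) approximation `HDR(h)` for bandwidths `h² I`. -/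
def HDRgen (K : Evec d → ℝ) (μ₂ ftau : ℝ) (fgrad fhess : Evec d → ℝ)
    (β L : Set (Evec d)) (n : ℕ) (h : ℝ) : ℝ :=
  ftau / Real.sqrt ((n : ℝ) * h ^ d) *
    ∫ x in β,
      (gpdf (Real.sqrt ((n : ℝ) * h ^ (d + 4)) * GxHDR K μ₂ ftau fgrad fhess β L x) +
        2 * gcdf (Real.sqrt ((n : ℝ) * h ^ (d + 4)) * GxHDR K μ₂ ftau fgrad fhess β L x) *
          (Real.sqrt ((n : ℝ) * h ^ (d + 4)) * GxHDR K μ₂ ftau fgrad fhess β L x) -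
        Real.sqrt ((n : ℝ) * h ^ (d + 4)) * GxHDR K μ₂ ftau fgrad fhess β L x) /
        -(AxGen K ftau fgrad x) ∂μH[(d : ℝ) - 1]

/-- `AR_HDR(s) = s^{−d/(d+4)} ∫_{β_τ} [φ(sG_x) + 2Φ(sG_x)sG_x − sG_x]/(−A_x) dℋ(x)`. -/
def ARHDR (K : Evec d → ℝ) (μ₂ : ℝ) (f₀ : Evec d → ℝ) (ftau : ℝ) (s : ℝ) : ℝ :=
  s ^ (-(d : ℝ) / ((d : ℝ) + 4)) *
    ∫ x in levelSet f₀ ftau,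
      (gpdf (s * GxHDR K μ₂ ftau f₀ f₀ (levelSet f₀ ftau) (supLevel f₀ ftau) x) +
        2 * gcdf (s * GxHDR K μ₂ ftau f₀ f₀ (levelSet f₀ ftau) (supLevel f₀ ftau) x) *
          (s * GxHDR K μ₂ ftau f₀ f₀ (levelSet f₀ ftau) (supLevel f₀ ftau) x) -
        s * GxHDR K μ₂ ftau f₀ f₀ (levelSet f₀ ftau) (supLevel f₀ ftau) x) /
        -(AxGen K ftau f₀ x) ∂μH[(d : ℝ) - 1]

/-- `Yₙ = O_p(aₙ)`: boundedness in probability at rate `aₙ`. -/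
def IsBigOp {Ω : Type*} [MeasurableSpace Ω] (P : Measure Ω) (Y : ℕ → Ω → ℝ)
    (a : ℕ → ℝ) : Prop :=
  ∀ ε : ℝ, 0 < ε → ∃ C : ℝ, 0 < C ∧
    ∀ᶠ n in atTop, P {ω | C * |a n| < |Y n ω|} ≤ ENNReal.ofReal ε


open scoped RealInnerProductSpace

lemma aux_sum_single_eq {d : ℕ} (v : Evec d) :
    ∑ i, v i • EuclideanSpace.single i (1:ℝ) = v := by
  ext j
  have : (∑ i, v i • EuclideanSpace.single i (1:ℝ)) j
      = ∑ i, (v i • EuclideanSpace.single i (1:ℝ)) j :=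
    by rw [WithLp.ofLp_sum, Finset.sum_apply]
  rw [this]
  simp [EuclideanSpace.single_apply]

lemma aux_abs_coord_le_norm {d : ℕ} (v : Evec d) (i : Fin d) : |v i| ≤ ‖v‖ := by
  rw [EuclideanSpace.norm_eq]
  have h1 : |v i| = Real.sqrt (v i ^ 2) := by rw [Real.sqrt_sq_eq_abs]
  rw [h1]
  apply Real.sqrt_le_sqrt
  have : v i ^ 2 = ‖v i‖ ^ 2 := by simp [Real.norm_eq_abs, sq_abs]
  rw [this]
  exact Finset.single_le_sum (f := fun j => ‖v j‖ ^ 2)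
    (fun j _ => by positivity) (Finset.mem_univ i)

lemma aux_inner_gradient_eq {d : ℕ} (f : Evec d → ℝ) (x v : Evec d) :
    ⟪gradient f x, v⟫ = fderiv ℝ f x v := by
  unfold gradient
  exact InnerProductSpace.toDual_symm_apply

lemma aux_bilin_bound {d : ℕ} (B : Evec d →L[ℝ] (Evec d →L[ℝ] ℝ)) (M : ℝ)
    (hM : ∀ i j, |B (EuclideanSpace.single i (1:ℝ)) (EuclideanSpace.single j (1:ℝ))| ≤ M)
    (v w : Evec d) : |B v w| ≤ ((d:ℝ)^2 * M) * (‖v‖ * ‖w‖) := by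
  have expand : ∀ (u : Evec d) (T : Evec d →L[ℝ] ℝ),
      T u = ∑ i, u i * T (EuclideanSpace.single i (1:ℝ)) := by
    intro u T
    conv_lhs => rw [← aux_sum_single_eq u]
    rw [map_sum]
    refine Finset.sum_congr rfl fun i _ => ?_
    rw [T.map_smul]; rfl
  have h1 : B v w = ∑ i, v i * (B (EuclideanSpace.single i (1:ℝ)) w) := by
    have : B v w = B.flip w v := rfl
    rw [this, expand v (B.flip w)]
    rfl
  rw [h1]
  have hinner : ∀ i : Fin d, |B (EuclideanSpace.single i (1:ℝ)) w| ≤ (d:ℝ) * (‖w‖ * M) := by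
    intro i
    rw [expand w (B (EuclideanSpace.single i (1:ℝ)))]
    calc |∑ j, w j * B (EuclideanSpace.single i (1:ℝ)) (EuclideanSpace.single j (1:ℝ))|
        ≤ ∑ j, |w j * B (EuclideanSpace.single i (1:ℝ)) (EuclideanSpace.single j (1:ℝ))| :=
          Finset.abs_sum_le_sum_abs _ _
      _ ≤ ∑ _j : Fin d, ‖w‖ * M := by
          refine Finset.sum_le_sum fun j _ => ?_
          rw [abs_mul]
          exact mul_le_mul (aux_abs_coord_le_norm w j) (hM i j) (abs_nonneg _) (norm_nonneg _)
      _ = (d:ℝ) * (‖w‖ * M) := by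
          rw [Finset.sum_const, Finset.card_univ, Fintype.card_fin, nsmul_eq_mul]
  calc |∑ i, v i * (B (EuclideanSpace.single i (1:ℝ)) w)|
      ≤ ∑ i, |v i * (B (EuclideanSpace.single i (1:ℝ)) w)| := Finset.abs_sum_le_sum_abs _ _
    _ ≤ ∑ _i : Fin d, ‖v‖ * ((d:ℝ) * (‖w‖ * M)) := by
        refine Finset.sum_le_sum fun i _ => ?_
        rw [abs_mul]
        exact mul_le_mul (aux_abs_coord_le_norm v i) (hinner i) (abs_nonneg _) (norm_nonneg _)
    _ = (d:ℝ) * (‖v‖ * ((d:ℝ) * (‖w‖ * M))) := by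
        rw [Finset.sum_const, Finset.card_univ, Fintype.card_fin, nsmul_eq_mul]
    _ = ((d:ℝ)^2 * M) * (‖v‖ * ‖w‖) := by ring

lemma aux_taylor_bound {d : ℕ} (f : Evec d → ℝ) (hf : ContDiff ℝ 2 f) (L : ℝ) (hL0 : 0 ≤ L)
    (hB : ∀ x (v w : Evec d), |fderiv ℝ (fderiv ℝ f) x v w| ≤ L * (‖v‖ * ‖w‖)) :
    ∀ y v, |f (y + v) - f y - fderiv ℝ f y v| ≤ L * ‖v‖ ^ 2 := by
  intro y v
  have hdf : Differentiable ℝ f := hf.differentiable (by norm_num)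
  have hdf2 : Differentiable ℝ (fderiv ℝ f) :=
    (hf.fderiv_right (m := 1) (by norm_num)).differentiable (by norm_num)
  have hop : ∀ x, ‖fderiv ℝ (fderiv ℝ f) x‖ ≤ L := by
    intro x
    refine ContinuousLinearMap.opNorm_le_bound _ hL0 fun u => ?_
    refine ContinuousLinearMap.opNorm_le_bound _ (mul_nonneg hL0 (norm_nonneg u)) fun w => ?_
    calc ‖fderiv ℝ (fderiv ℝ f) x u w‖ = |fderiv ℝ (fderiv ℝ f) x u w| := Real.norm_eq_abs _
      _ ≤ L * (‖u‖ * ‖w‖) := hB x u w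
      _ = L * ‖u‖ * ‖w‖ := by ring
  have hlip : ∀ p q : Evec d, ‖fderiv ℝ f p - fderiv ℝ f q‖ ≤ L * ‖p - q‖ := fun p q =>
    Convex.norm_image_sub_le_of_norm_fderiv_le (fun x _ => hdf2 x) (fun x _ => hop x)
      convex_univ (Set.mem_univ q) (Set.mem_univ p)
  set c : ℝ := fderiv ℝ f y v with hc
  set g : ℝ → ℝ := fun t => f (y + t • v) - t * c with hg
  have hgderiv : ∀ t : ℝ, HasDerivAt g (fderiv ℝ f (y + t • v) v - c) t := by
    intro t
    have h1 : HasDerivAt (fun s : ℝ => y + s • v) v t := by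
      simpa using ((hasDerivAt_id t).smul_const v).const_add y
    have h2 : HasDerivAt (fun s : ℝ => f (y + s • v)) (fderiv ℝ f (y + t • v) v) t :=
      (hdf _).hasFDerivAt.comp_hasDerivAt t h1
    simpa using h2.fun_sub ((hasDerivAt_id t).mul_const c)
  have bound : ∀ t ∈ Set.Ico (0:ℝ) 1, ‖fderiv ℝ f (y + t • v) v - c‖ ≤ L * ‖v‖ ^ 2 := by
    intro t ht
    have h3 : fderiv ℝ f (y + t • v) v - c = (fderiv ℝ f (y + t • v) - fderiv ℝ f y) v := by
      simp [hc]
    rw [h3]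
    calc ‖(fderiv ℝ f (y + t • v) - fderiv ℝ f y) v‖
        ≤ ‖fderiv ℝ f (y + t • v) - fderiv ℝ f y‖ * ‖v‖ :=
          ContinuousLinearMap.le_opNorm _ _
      _ ≤ (L * ‖y + t • v - y‖) * ‖v‖ :=
          mul_le_mul_of_nonneg_right (hlip _ _) (norm_nonneg _)
      _ = L * (|t| * ‖v‖) * ‖v‖ := by rw [add_sub_cancel_left, norm_smul, Real.norm_eq_abs]
      _ ≤ L * (1 * ‖v‖) * ‖v‖ := by
          have : |t| ≤ 1 := by
            rw [abs_of_nonneg ht.1]; exact ht.2.le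
          gcongr
      _ = L * ‖v‖ ^ 2 := by ring
  have key := norm_image_sub_le_of_norm_deriv_le_segment_01'
      (f := g) (f' := fun t => fderiv ℝ f (y + t • v) v - c)
      (fun t _ => (hgderiv t).hasDerivWithinAt) bound
  have hg1 : g 1 = f (y + v) - c := by simp [hg]
  have hg0 : g 0 = f y := by simp [hg]
  calc |f (y + v) - f y - fderiv ℝ f y v| = ‖g 1 - g 0‖ := by
        rw [hg1, hg0, Real.norm_eq_abs, ← hc]; ring_nf
    _ ≤ L * ‖v‖ ^ 2 := key

lemma aux_descent {d : ℕ} (f : Evec d → ℝ) (hc : Continuous f) (c a b L : ℝ)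
    (hb : 0 < b) (hL : 0 < L)
    (hgrad : ∀ y, c ≤ f y → f y ≤ c + a → b ≤ ‖gradient f y‖)
    (htay : ∀ y v, |f (y + v) - f y - ⟪gradient f y, v⟫| ≤ L * ‖v‖ ^ 2) :
    ∀ x, c ≤ f x → f x ≤ c + a / 2 →
      ∃ z, f z = c ∧ dist x z ≤ (2 / b + 1) * (f x - c) := by
  intro x hx1 hx2
  rcases eq_or_lt_of_le hx1 with heq | hlt
  · exact ⟨x, heq.symm, by simp [← heq]⟩
  set ε : ℝ := f x - c with hε
  have hε0 : 0 < ε := by simp [hε]; linarith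
  set h : ℝ := min ε (b / (2 * L)) with hh
  have hh0 : 0 < h := lt_min hε0 (by positivity)
  have hhε : h ≤ ε := min_le_left _ _
  have hhL : L * h ≤ b / 2 := by
    have : h ≤ b / (2 * L) := min_le_right _ _
    calc L * h ≤ L * (b / (2 * L)) := by gcongr
      _ = b / 2 := by field_simp
  have claim : ∀ k : ℕ, ∀ y : Evec d, c ≤ f y → f y ≤ c + a / 2 →
      f y ≤ c + k * (h * b / 2) → ∃ z, f z = c ∧ dist y z ≤ k * h := by
    intro k
    induction k with
    | zero =>
      intro y hy1 hy2 hy3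
      refine ⟨y, le_antisymm (by simpa using hy3) hy1, by simp⟩
    | succ k ih =>
      intro y hy1 hy2 hy3
      rcases eq_or_lt_of_le hy1 with heq | hlt'
      · exact ⟨y, heq.symm, by simp; positivity⟩
      have hbg : b ≤ ‖gradient f y‖ := hgrad y hy1 (by linarith)
      have hgpos : 0 < ‖gradient f y‖ := lt_of_lt_of_le hb hbg
      have hgne : gradient f y ≠ 0 := by
        intro h0; rw [h0, norm_zero] at hgpos; exact lt_irrefl _ hgpos
      set v : Evec d := -((h / ‖gradient f y‖) • gradient f y) with hv
      have hnv : ‖v‖ = h := by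
        rw [hv, norm_neg, norm_smul, Real.norm_eq_abs,
          abs_of_pos (by positivity : (0:ℝ) < h / ‖gradient f y‖)]
        field_simp
      have hinn : ⟪gradient f y, v⟫ = -(h * ‖gradient f y‖) := by
        rw [hv, inner_neg_right, real_inner_smul_right, real_inner_self_eq_norm_sq]
        field_simp
      have hstep : f (y + v) ≤ f y - h * b / 2 := by
        have h1 := (abs_le.mp (htay y v)).2
        have h2 : L * ‖v‖ ^ 2 = L * h * h := by rw [hnv]; ring
        have h3 : L * h * h ≤ b / 2 * h :=
          mul_le_mul_of_nonneg_right hhL hh0.le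
        have h4 : h * b ≤ h * ‖gradient f y‖ := by gcongr
        nlinarith [h1, hinn]
      rcases le_or_gt c (f (y + v)) with hcase | hcase
      · obtain ⟨z, hz1, hz2⟩ := ih (y + v) hcase (by nlinarith [mul_pos hh0 hb])
          (by push_cast at hy3 ⊢; linarith)
        refine ⟨z, hz1, ?_⟩
        calc dist y z ≤ dist y (y + v) + dist (y + v) z := dist_triangle _ _ _
          _ ≤ h + k * h := by
              rw [dist_self_add_right, hnv]
              gcongr
          _ = (k + 1 : ℕ) * h := by push_cast; ring
      · have hG : Continuous fun t : ℝ => f (y + t • v) :=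
          hc.comp (continuous_const.add (continuous_id.smul continuous_const))
        have hmem : c ∈ Set.Icc (f (y + (1:ℝ) • v)) (f (y + (0:ℝ) • v)) := by
          simp only [one_smul, zero_smul, add_zero]
          exact ⟨hcase.le, hlt'.le⟩
        obtain ⟨t, ht01, htz⟩ := intermediate_value_Icc' (zero_le_one) hG.continuousOn hmem
        refine ⟨y + t • v, htz, ?_⟩
        rw [dist_self_add_right, norm_smul, Real.norm_eq_abs, hnv]
        have ht1 : |t| ≤ 1 := by rw [abs_of_nonneg ht01.1]; exact ht01.2
        have hk1 : (1:ℝ) ≤ ((k + 1 : ℕ) : ℝ) := by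
          exact_mod_cast Nat.one_le_iff_ne_zero.mpr (Nat.succ_ne_zero k)
        nlinarith [hh0.le]
  set k : ℕ := ⌈ε / (h * b / 2)⌉₊ with hk
  have hdenom : 0 < h * b / 2 := by positivity
  have hkge : ε ≤ k * (h * b / 2) := by
    have := Nat.le_ceil (ε / (h * b / 2))
    calc ε = ε / (h * b / 2) * (h * b / 2) := by field_simp
      _ ≤ k * (h * b / 2) := mul_le_mul_of_nonneg_right this hdenom.le
  obtain ⟨z, hz1, hz2⟩ := claim k x hx1 hx2 (by linarith)
  refine ⟨z, hz1, ?_⟩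
  have hkle : (k : ℝ) < ε / (h * b / 2) + 1 := by
    apply Nat.ceil_lt_add_one
    positivity
  calc dist x z ≤ k * h := hz2
    _ ≤ (ε / (h * b / 2) + 1) * h := by gcongr
    _ = 2 * ε / b + h := by field_simp
    _ ≤ 2 * ε / b + ε := by linarith
    _ = (2 / b + 1) * (f x - c) := by rw [← hε]; field_simp

lemma aux_key_sep {d : ℕ} (f : Evec d → ℝ) (hc : Continuous f) (c a b L : ℝ)
    (ha : 0 < a) (hb : 0 < b) (hL : 0 < L)
    (hgrad : ∀ y, c - a ≤ f y → f y ≤ c + a → b ≤ ‖gradient f y‖)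
    (htay : ∀ y v, |f (y + v) - f y - ⟪gradient f y, v⟫| ≤ L * ‖v‖ ^ 2) :
    ∀ x, |f x - c| ≤ a / 2 → ∃ z, f z = c ∧ dist x z ≤ (2 / b + 1) * |f x - c| := by
  intro x hx
  have habs := abs_le.mp hx
  rcases le_or_gt c (f x) with hcase | hcase
  · obtain ⟨z, hz1, hz2⟩ := aux_descent f hc c a b L hb hL
      (fun y h1 h2 => hgrad y (by linarith) h2) htay x hcase (by linarith [habs.2])
    exact ⟨z, hz1, by rwa [abs_of_nonneg (by linarith : (0:ℝ) ≤ f x - c)]⟩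
  · have hgneg : ∀ y, gradient (fun w => -(f w)) y = -(gradient f y) := by
      intro y
      unfold gradient
      rw [fderiv_fun_neg, map_neg]
    obtain ⟨z, hz1, hz2⟩ := aux_descent (fun w => -(f w)) hc.neg (-c) a b L hb hL
      (fun y h1 h2 => by
        have h1' : -c ≤ -(f y) := h1
        have h2' : -(f y) ≤ -c + a := h2
        rw [hgneg, norm_neg]
        exact hgrad y (by linarith) (by linarith))
      (fun y v => by
        rw [hgneg, inner_neg_left]
        have : -(f (y + v)) - -(f y) - -⟪gradient f y, v⟫
            = -(f (y + v) - f y - ⟪gradient f y, v⟫) := by ring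
        rw [this, abs_neg]
        exact htay y v)
      x (show -c ≤ -(f x) by linarith) (show -(f x) ≤ -c + a / 2 by linarith [habs.1])
    have hz1' : -(f z) = -c := hz1
    refine ⟨z, by linarith, ?_⟩
    rw [abs_of_neg (by linarith : f x - c < 0)]
    calc dist x z ≤ (2 / b + 1) * (-(f x) - -c) := hz2
      _ = (2 / b + 1) * -(f x - c) := by ring

lemma aux_hessian_entry {d : ℕ} (f : Evec d → ℝ) (x : Evec d) (i j : Fin d) :
    hessian f x i j
      = fderiv ℝ (fderiv ℝ f) x (EuclideanSpace.single i (1:ℝ))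
          (EuclideanSpace.single j (1:ℝ)) := by
  show iteratedFDeriv ℝ 2 f x ![EuclideanSpace.single i (1:ℝ), EuclideanSpace.single j (1:ℝ)] = _
  rw [iteratedFDeriv_two_apply]
  simp

/-- **Lemma B.3 (level separation near the contour).**
Under Assumptions D1b and D2, for `δ > 0` small enough there is `c₂ > 0` such that
taking `εₙ = c₂ δₙ` (for any `0 < δₙ ≤ δ`) one has `|f₀(x) − f_{τ,0}| ≥ εₙ` on
`(L_{δₙ}ᶜ \ L_δᶜ) ∪ (L_{−δₙ} \ L_{−δ})`. -/
theorem level_separation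
    {d : ℕ} (hd : 2 ≤ d)
    (f₀ : Evec d → ℝ) (hf₀ : IsDensity f₀)
    (τ : ℝ) (hτ : τ ∈ Set.Ioo (0 : ℝ) 1)
    (hD1b : AssumptionD1b f₀ (tauLevel τ f₀))
    (hD2 : IsCompact (levelSet f₀ (tauLevel τ f₀))) :
    ∃ δ : ℝ, 0 < δ ∧ ∃ c₂ : ℝ, 0 < c₂ ∧
      ∀ δn : ℝ, 0 < δn → δn ≤ δ →
        ∀ x ∈ ((tube (supLevel f₀ (tauLevel τ f₀)) δn)ᶜ \
              (tube (supLevel f₀ (tauLevel τ f₀)) δ)ᶜ) ∪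
            ((supLevel f₀ (tauLevel τ f₀) \ tube (levelSet f₀ (tauLevel τ f₀)) δn) \
              (supLevel f₀ (tauLevel τ f₀) \ tube (levelSet f₀ (tauLevel τ f₀)) δ)),
          c₂ * δn ≤ |f₀ x - tauLevel τ f₀| := by
  obtain ⟨a, ha, ⟨b, hb, hgrad⟩, -⟩ := hD1b.levelNbhd
  obtain ⟨M, hM⟩ := hD1b.derivBounded
  set c := tauLevel τ f₀ with hcdef
  have i0 : Fin d := ⟨0, by omega⟩
  have hM0 : 0 ≤ M := le_trans (abs_nonneg _) ((hM 0).2 i0 i0)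
  set L : ℝ := (d:ℝ)^2 * M + 1 with hLdef
  have hL : 0 < L := by positivity
  have hcont : Continuous f₀ := hD1b.smooth.continuous
  have htayf : ∀ y v, |f₀ (y + v) - f₀ y - fderiv ℝ f₀ y v| ≤ L * ‖v‖ ^ 2 := by
    apply aux_taylor_bound f₀ hD1b.smooth L hL.le
    intro x v w
    have hent : ∀ i j, |fderiv ℝ (fderiv ℝ f₀) x (EuclideanSpace.single i (1:ℝ))
        (EuclideanSpace.single j (1:ℝ))| ≤ M := by
      intro i j
      rw [← aux_hessian_entry]
      exact (hM x).2 i j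
    calc |fderiv ℝ (fderiv ℝ f₀) x v w| ≤ ((d:ℝ)^2 * M) * (‖v‖ * ‖w‖) :=
        aux_bilin_bound _ M hent v w
      _ ≤ L * (‖v‖ * ‖w‖) := by
        apply mul_le_mul_of_nonneg_right _ (by positivity)
        rw [hLdef]; linarith
  have htay : ∀ y v, |f₀ (y + v) - f₀ y - ⟪gradient f₀ y, v⟫| ≤ L * ‖v‖ ^ 2 := by
    intro y v; rw [aux_inner_gradient_eq]; exact htayf y v
  have key := aux_key_sep f₀ hcont c a b L ha hb hL hgrad htay
  have hC : 0 < 2 / b + 1 := by positivity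
  set c₂ : ℝ := min (2 / b + 1)⁻¹ (a / 2) with hc₂def
  have hc₂ : 0 < c₂ := lt_min (by positivity) (by linarith)
  refine ⟨1, one_pos, c₂, hc₂, ?_⟩
  intro δn hδn1 hδn2 x hx
  have hc₂C : c₂ * (2 / b + 1) ≤ 1 := by
    calc c₂ * (2 / b + 1) ≤ (2 / b + 1)⁻¹ * (2 / b + 1) :=
        mul_le_mul_of_nonneg_right (min_le_left _ _) hC.le
      _ = 1 := inv_mul_cancel₀ hC.ne'
  have hc₂a : c₂ ≤ a / 2 := min_le_right _ _
  have main : ∀ S : Set (Evec d), levelSet f₀ c ⊆ S → x ∉ tube S δn →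
      c₂ * δn ≤ |f₀ x - c| := by
    intro S hS hx'
    by_contra hcon
    push_neg at hcon
    have h1 : |f₀ x - c| ≤ a / 2 := by
      have h2 : c₂ * δn ≤ (a / 2) * 1 := mul_le_mul hc₂a hδn2 hδn1.le (by linarith)
      linarith
    obtain ⟨z, hz1, hz2⟩ := key x h1
    refine hx' (Set.mem_biUnion (hS hz1) ?_)
    rw [Metric.mem_closedBall]
    calc dist x z ≤ (2 / b + 1) * |f₀ x - c| := hz2
      _ ≤ (2 / b + 1) * (c₂ * δn) := mul_le_mul_of_nonneg_left hcon.le hC.le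
      _ = (c₂ * (2 / b + 1)) * δn := by ring
      _ ≤ 1 * δn := mul_le_mul_of_nonneg_right hc₂C hδn1.le
      _ = δn := one_mul δn
  rcases hx with hxA | hxB
  · refine main (supLevel f₀ c) (fun z hz => ?_) hxA.1
    have hz' : f₀ z = c := hz
    exact le_of_eq hz'.symm
  · exact main (levelSet f₀ c) subset_rfl hxB.1.2


end LSBS
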